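/- The commutator subgroup of Λ(n,m;r) equals the cyclic subgroup generated by α^{r−1}. -/

import Mathlib

/-- Relations of the metacyclic group Λ(n,m;r) = ⟨α,β | αⁿ = βᵐ = 1, βαβ⁻¹ = αʳ⟩. -/
def metacyclicRels (n m r : ℕ) : Set (FreeGroup (Fin 2)) :=
  { FreeGroup.of 0 ^ n, FreeGroup.of 1 ^ m,
    FreeGroup.of 1 * FreeGroup.of 0 * (FreeGroup.of 1)⁻¹ * (FreeGroup.of 0 ^ r)⁻¹ }

/-- The split metacyclic group Λ(n,m;r). -/
abbrev Lam (n m r : ℕ) := PresentedGroup (metacyclicRels n m r)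

def lamAlpha (n m r : ℕ) : Lam n m r := PresentedGroup.of 0
def lamBeta (n m r : ℕ) : Lam n m r := PresentedGroup.of 1

namespace LamAux

variable {n m r : ℕ}

lemma rel_eq_one {x : FreeGroup (Fin 2)} (h : x ∈ metacyclicRels n m r) :
    PresentedGroup.mk (metacyclicRels n m r) x = 1 :=
  (QuotientGroup.eq_one_iff _).mpr (Subgroup.subset_normalClosure h)

lemma alpha_pow : (lamAlpha n m r) ^ n = 1 := by
  have := rel_eq_one (n := n) (m := m) (r := r) (Set.mem_insert _ _)
  rw [map_pow] at this
  exact this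

lemma beta_pow : (lamBeta n m r) ^ m = 1 := by
  have := rel_eq_one (n := n) (m := m) (r := r)
    (Set.mem_insert_of_mem _ (Set.mem_insert _ _))
  rw [map_pow] at this
  exact this

lemma conj_rel : lamBeta n m r * lamAlpha n m r * (lamBeta n m r)⁻¹ = (lamAlpha n m r) ^ r := by
  have := rel_eq_one (n := n) (m := m) (r := r)
    (Set.mem_insert_of_mem _ (Set.mem_insert_of_mem _ rfl))
  rw [map_mul, map_mul, map_inv, map_inv, map_mul, map_pow, mul_inv_eq_one] at this
  exact this

end LamAux

namespace LamAux2
open LamAux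
variable {n m r : ℕ}

local notation "a" => lamAlpha n m r
local notation "b" => lamBeta n m r

lemma conj_pow_j : ∀ j : ℕ, (b) ^ j * a * ((b) ^ j)⁻¹ = (a) ^ (r ^ j)
  | 0 => by simp
  | (j+1) => by
    have ih := conj_pow_j j
    have : (b) ^ (j+1) * a * ((b) ^ (j+1))⁻¹
        = b * ((b) ^ j * a * ((b) ^ j)⁻¹) * (b)⁻¹ := by
      rw [pow_succ']; group
    rw [this, ih, ← conj_pow, conj_rel, ← pow_mul, pow_succ']

lemma conj_x_j (j : ℕ) :
    (b) ^ j * (a ^ (r-1)) * ((b) ^ j)⁻¹ = (a ^ (r-1)) ^ (r ^ j) := by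
  rw [← conj_pow, conj_pow_j, ← pow_mul, ← pow_mul, mul_comm]

lemma binv_eq (hm : 0 < m) : (b)⁻¹ = (b) ^ (m - 1) := by
  rw [eq_comm, eq_inv_iff_mul_eq_one, ← pow_succ, Nat.sub_add_cancel hm]
  exact beta_pow

end LamAux2

open LamAux LamAux2
open scoped commutatorElement

set_option linter.unusedVariables false in
theorem stmt4 (n m r : ℕ) (hn : 0 < n) (hm : 0 < m) (hr : 0 < r)
    (hrm : r ^ m ≡ 1 [MOD n]) :
    commutator (Lam n m r) = Subgroup.closure {(lamAlpha n m r) ^ (r - 1)} := by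
  set x : Lam n m r := (lamAlpha n m r) ^ (r - 1) with hxdef
  set N := Subgroup.closure {x} with hNdef
  have mem_x : x ∈ N := Subgroup.subset_closure rfl
  -- conjugation facts
  have ca : lamAlpha n m r * x * (lamAlpha n m r)⁻¹ = x := by
    have h : Commute (lamAlpha n m r) x := (Commute.refl _).pow_right _
    rw [h.eq, mul_inv_cancel_right]
  have ca' : (lamAlpha n m r)⁻¹ * x * ((lamAlpha n m r)⁻¹)⁻¹ = x := by
    have h : Commute ((lamAlpha n m r)⁻¹) x := ((Commute.refl _).pow_right _).inv_left
    rw [h.eq, mul_inv_cancel_right]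
  have cb : lamBeta n m r * x * (lamBeta n m r)⁻¹ = x ^ r := by
    have := conj_x_j (n := n) (m := m) (r := r) 1
    simpa using this
  have cb' : (lamBeta n m r)⁻¹ * x * ((lamBeta n m r)⁻¹)⁻¹ = x ^ (r ^ (m-1)) := by
    rw [binv_eq hm]
    exact conj_x_j (m - 1)
  -- conjugation preserves N
  have key : ∀ g : Lam n m r, g * x * g⁻¹ ∈ N → ∀ h ∈ N, g * h * g⁻¹ ∈ N := by
    intro g hg h hh
    obtain ⟨k, hk⟩ := Subgroup.mem_closure_singleton.mp hh
    rw [← hk, ← conj_zpow]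
    exact Subgroup.zpow_mem N hg k
  have hgs : ∀ g : Lam n m r, g * x * g⁻¹ ∈ N → g⁻¹ * x * (g⁻¹)⁻¹ ∈ N →
      g ∈ Subgroup.normalizer (N : Set (Lam n m r)) := by
    intro g h1 h2
    rw [Subgroup.mem_normalizer_iff]
    intro h
    constructor
    · exact fun hh => key g h1 h hh
    · intro hh
      have := key g⁻¹ h2 _ hh
      have e : g⁻¹ * (g * h * g⁻¹) * (g⁻¹)⁻¹ = h := by group
      rwa [e] at this
  have hnormal : N.Normal := by
    rw [← Subgroup.normalizer_eq_top_iff, eq_top_iff]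
    intro g _
    refine PresentedGroup.generated_by _ _ ?_ g
    intro j
    fin_cases j
    · show lamAlpha n m r ∈ Subgroup.normalizer (N : Set (Lam n m r))
      exact hgs _ (by rw [ca]; exact mem_x) (by rw [ca']; exact mem_x)
    · show lamBeta n m r ∈ Subgroup.normalizer (N : Set (Lam n m r))
      exact hgs _ (by rw [cb]; exact pow_mem mem_x r) (by rw [cb']; exact pow_mem mem_x _)
  -- the commutator of the generators
  have hba_eq : lamBeta n m r * lamAlpha n m r * (lamBeta n m r)⁻¹ * (lamAlpha n m r)⁻¹
      = x := by
    have hpow : lamAlpha n m r ^ r = x * lamAlpha n m r := by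
      rw [hxdef, ← pow_succ, Nat.sub_add_cancel hr]
    rw [conj_rel, hpow, mul_inv_cancel_right]
  haveI := hnormal
  set π := QuotientGroup.mk' N with hπ
  have hcommab : Commute (π (lamAlpha n m r)) (π (lamBeta n m r)) := by
    rw [← commutatorElement_eq_one_iff_commute, ← map_commutatorElement,
      ← MonoidHom.mem_ker, QuotientGroup.ker_mk']
    show lamAlpha n m r * lamBeta n m r * (lamAlpha n m r)⁻¹ * (lamBeta n m r)⁻¹ ∈ N
    have : (lamBeta n m r * lamAlpha n m r * (lamBeta n m r)⁻¹ * (lamAlpha n m r)⁻¹)⁻¹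
        = lamAlpha n m r * lamBeta n m r * (lamAlpha n m r)⁻¹ * (lamBeta n m r)⁻¹ := by
      group
    rw [← this, hba_eq]
    exact inv_mem mem_x
  have stepA : ∀ g : Lam n m r,
      π g ∈ Subgroup.centralizer {π (lamAlpha n m r), π (lamBeta n m r)} := by
    intro g
    have : g ∈ Subgroup.comap π
        (Subgroup.centralizer {π (lamAlpha n m r), π (lamBeta n m r)}) := by
      refine PresentedGroup.generated_by _ _ ?_ g
      intro j
      rw [Subgroup.mem_comap, Subgroup.mem_centralizer_iff]
      intro y hy
      simp only [Set.mem_insert_iff, Set.mem_singleton_iff] at hy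
      fin_cases j <;> rcases hy with rfl | rfl
      · rfl
      · exact hcommab.symm.eq
      · exact hcommab.eq
      · rfl
    exact this
  have stepB : ∀ g h : Lam n m r, π h * π g = π g * π h := by
    intro g h
    have hg := stepA g
    have : h ∈ Subgroup.comap π (Subgroup.centralizer {π g}) := by
      refine PresentedGroup.generated_by _ _ ?_ h
      intro j
      rw [Subgroup.mem_comap, Subgroup.mem_centralizer_iff]
      intro y hy
      rw [Set.mem_singleton_iff] at hy
      subst hy
      fin_cases j
      · exact (Subgroup.mem_centralizer_iff.mp hg _ (Set.mem_insert _ _)).symm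
      · exact (Subgroup.mem_centralizer_iff.mp hg _
          (Set.mem_insert_of_mem _ rfl)).symm
    exact Subgroup.mem_comap.mp this _ (Set.mem_singleton _) |>.symm ▸ rfl
  apply le_antisymm
  · rw [commutator_def, Subgroup.commutator_le]
    intro g _ h _
    show ⁅g, h⁆ ∈ N
    rw [← QuotientGroup.ker_mk' N, MonoidHom.mem_ker, ← hπ, map_commutatorElement,
      commutatorElement_eq_one_iff_commute]
    exact stepB h g
  · rw [Subgroup.closure_le, Set.singleton_subset_iff]
    rw [commutator_def]
    have : x = ⁅lamBeta n m r, lamAlpha n m r⁆ := hba_eq.symm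
    rw [this]
    exact Subgroup.commutator_mem_commutator (Subgroup.mem_top _) (Subgroup.mem_top _)
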